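/- arXiv:2110.08108 — 2 statements merged into one kernel-verified Lean document; each statement's English description precedes it below -/
import Mathlib

section
/- Let t_m = m(m+1)/2. For every positive integer n, Σ_{π ⊢ n, mex(π) even} mex(π) = Σ_{m≥0} (2m+2) (p(n − t_{2m+1}) − p(n − t_{2m+2})), with p(j)=0 for j<0. -/
open Finset

/-- The minimal excludant of a partition: the least positive integer not a part. -/
noncomputable def mex {n : ℕ} (π : Nat.Partition n) : ℕ :=
  sInf {m : ℕ | 0 < m ∧ m ∉ π.parts}

/-- Number of partitions of `n` with minimal excludant `m`. -/
noncomputable def pmex (m n : ℕ) : ℕ :=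
  ((Finset.univ : Finset (Nat.Partition n)).filter (fun π => mex π = m)).card

/-- The partition function, extended by `0` on negative integers. -/
noncomputable def pz (k : ℤ) : ℕ := if 0 ≤ k then Fintype.card (Nat.Partition k.toNat) else 0

/-- Number of partitions of `m` into distinct parts. -/
def qdist (m : ℕ) : ℕ := (Nat.Partition.distincts m).card

/-- A two-colored distinct-parts partition of `n`: a set of distinct (part, color)
pairs with positive parts summing to `n`. -/
def IsTCD (n : ℕ) (s : Finset (ℕ × Fin 2)) : Prop :=
  (∀ p ∈ s, 0 < p.1) ∧ ∑ p ∈ s, p.1 = n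

noncomputable def D2 (n : ℕ) : ℕ := Set.ncard {s : Finset (ℕ × Fin 2) | IsTCD n s}
noncomputable def D2e (n : ℕ) : ℕ :=
  Set.ncard {s : Finset (ℕ × Fin 2) | IsTCD n s ∧ Even s.card}
noncomputable def D2o (n : ℕ) : ℕ :=
  Set.ncard {s : Finset (ℕ × Fin 2) | IsTCD n s ∧ Odd s.card}

lemma mex_mem {n : ℕ} (π : Nat.Partition n) :
    mex π ∈ {m : ℕ | 0 < m ∧ m ∉ π.parts} := by
  apply Nat.sInf_mem
  refine ⟨n + 1, Nat.succ_pos n, fun h => ?_⟩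
  have : n + 1 ≤ π.parts.sum := Multiset.single_le_sum (fun x _ => Nat.zero_le x) _ h
  rw [π.parts_sum] at this; omega

lemma mex_pos {n : ℕ} (π : Nat.Partition n) : 0 < mex π := (mex_mem π).1
lemma mex_not_mem {n : ℕ} (π : Nat.Partition n) : mex π ∉ π.parts := (mex_mem π).2

lemma mem_of_lt_mex {n : ℕ} (π : Nat.Partition n) {i : ℕ} (h1 : 0 < i) (h2 : i < mex π) :
    i ∈ π.parts := by
  by_contra h
  have : mex π ≤ i := Nat.sInf_le (s := {m : ℕ | 0 < m ∧ m ∉ π.parts}) ⟨h1, h⟩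
  omega

lemma mex_le {n : ℕ} (π : Nat.Partition n) : mex π ≤ n + 1 := by
  apply Nat.sInf_le
  refine ⟨Nat.succ_pos n, fun h => ?_⟩
  have : n + 1 ≤ π.parts.sum := Multiset.single_le_sum (fun x _ => Nat.zero_le x) _ h
  rw [π.parts_sum] at this; omega

lemma sum_Icc_one (k : ℕ) : ∑ i ∈ Finset.Icc 1 k, i = k * (k + 1) / 2 := by
  have h : Finset.range (k + 1) = insert 0 (Finset.Icc 1 k) := by
    ext i; simp; omega
  have h2 := Finset.sum_range_id (k + 1)
  rw [h, Finset.sum_insert (by simp)] at h2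
  simpa [Nat.mul_comm] using h2

instance instA (n : ℕ) (s : Finset ℕ) :
    DecidablePred fun π : Nat.Partition n => ∀ i ∈ s, i ∈ π.parts :=
  inferInstance

/-- partitions of `n` containing each of `1, …, k` as a part -/
def Ak (n k : ℕ) : Finset (Nat.Partition n) :=
  @Finset.filter _ (fun π => ∀ i ∈ Finset.Icc 1 k, i ∈ π.parts)
    (instA n (Finset.Icc 1 k)) Finset.univ

lemma mem_Ak {n k : ℕ} {π : Nat.Partition n} :
    π ∈ Ak n k ↔ ∀ i ∈ Finset.Icc 1 k, i ∈ π.parts := by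
  rw [Ak, Finset.mem_filter]
  simp

lemma icc_val_le {n k : ℕ} {π : Nat.Partition n} (h : ∀ i ∈ Finset.Icc 1 k, i ∈ π.parts) :
    (Finset.Icc 1 k).val ≤ π.parts :=
  (Multiset.le_iff_subset (Finset.Icc 1 k).nodup).2 (fun i hi => h i hi)

lemma icc_val_sum (k : ℕ) : (Finset.Icc 1 k).val.sum = k * (k + 1) / 2 := by
  have h2 : (Finset.Icc 1 k).val.sum = ∑ i ∈ Finset.Icc 1 k, i := by
    rw [Finset.sum]; rw [Multiset.map_id']
  rw [h2, sum_Icc_one]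

lemma cardA (n k : ℕ) :
    ((Ak n k).card : ℤ) = pz ((n : ℤ) - (k * (k + 1) / 2 : ℕ)) := by
  set T := k * (k + 1) / 2 with hT
  by_cases h : T ≤ n
  · have hpz : pz ((n : ℤ) - T) = Fintype.card (Nat.Partition (n - T)) := by
      have h2 : ((n : ℤ) - T).toNat = n - T := by omega
      rw [pz, if_pos (by omega), h2]
    rw [hpz, ← Finset.card_univ]
    congr 1
    refine Finset.card_bij'
      (fun π hπ => ⟨π.parts - (Finset.Icc 1 k).val, ?_, ?_⟩)
      (fun σ _ => ⟨σ.parts + (Finset.Icc 1 k).val, ?_, ?_⟩) ?_ ?_ ?_ ?_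
    · intro i hi
      exact π.parts_pos (Multiset.mem_of_le (tsub_le_self) hi)
    · have hle : (Finset.Icc 1 k).val ≤ π.parts := icc_val_le (mem_Ak.1 hπ)
      have hadd : (π.parts - (Finset.Icc 1 k).val) + (Finset.Icc 1 k).val = π.parts :=
        tsub_add_cancel_of_le hle
      have := congrArg Multiset.sum hadd
      rw [Multiset.sum_add, π.parts_sum, icc_val_sum] at this
      omega
    · intro i hi
      rcases Multiset.mem_add.1 hi with h' | h'
      · exact σ.parts_pos h'
      · have := Finset.mem_Icc.1 (by simpa using h')
        omega
    · rw [Multiset.sum_add, σ.parts_sum, icc_val_sum]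
      omega
    · intro π hπ
      exact Finset.mem_univ _
    · intro σ hσ
      refine mem_Ak.2 (fun i hi => ?_)
      exact Multiset.mem_add.2 (Or.inr (by simpa using hi))
    · intro π hπ
      have hle : (Finset.Icc 1 k).val ≤ π.parts := icc_val_le (mem_Ak.1 hπ)
      exact Nat.Partition.ext (tsub_add_cancel_of_le hle)
    · intro σ hσ
      exact Nat.Partition.ext (add_tsub_cancel_right _ _)
  · have h1 : Ak n k = ∅ := by
      rw [Finset.eq_empty_iff_forall_notMem]
      intro π hπ
      have hle : (Finset.Icc 1 k).val ≤ π.parts := icc_val_le (mem_Ak.1 hπ)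
      have hadd : (π.parts - (Finset.Icc 1 k).val) + (Finset.Icc 1 k).val = π.parts :=
        tsub_add_cancel_of_le hle
      have := congrArg Multiset.sum hadd
      rw [Multiset.sum_add, π.parts_sum, icc_val_sum] at this
      omega
    rw [h1, pz, if_neg (by omega)]
    simp

lemma fiber_eq (n k : ℕ) (hk : 0 < k) :
    (Finset.univ : Finset (Nat.Partition n)).filter (fun π => mex π = k)
      = Ak n (k - 1) \ Ak n k := by
  ext π
  simp only [Finset.mem_sdiff, Finset.mem_filter, Finset.mem_univ, true_and,
    mem_Ak, Finset.mem_Icc]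
  constructor
  · rintro rfl
    have hpos := mex_pos π
    refine ⟨fun i hi => mem_of_lt_mex π (by omega) (by omega), fun hc => ?_⟩
    exact mex_not_mem π (hc (mex π) ⟨hpos, le_rfl⟩)
  · rintro ⟨h1, h2⟩
    have hknot : k ∉ π.parts := by
      by_contra hkmem
      refine h2 (fun i hi => ?_)
      rcases Nat.lt_or_ge i k with h' | h'
      · exact h1 i ⟨hi.1, by omega⟩
      · have hik : i = k := by omega
        exact hik ▸ hkmem
    have hle : mex π ≤ k := Nat.sInf_le ⟨hk, hknot⟩
    have hge : k ≤ mex π := by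
      by_contra hc
      exact (mex_mem π).2 (h1 (mex π) ⟨mex_pos π, by omega⟩)
    omega

lemma subset_A (n k : ℕ) : Ak n k ⊆ Ak n (k - 1) := by
  intro π hπ
  rw [mem_Ak] at *
  intro i hi
  rw [Finset.mem_Icc] at hi
  exact hπ i (Finset.mem_Icc.2 ⟨hi.1, by omega⟩)

lemma pmex_card (n k : ℕ) (hk : 0 < k) :
    ((((Finset.univ : Finset (Nat.Partition n)).filter (fun π => mex π = k)).card : ℤ))
      = pz ((n : ℤ) - ((k - 1) * k / 2 : ℕ)) - pz ((n : ℤ) - (k * (k + 1) / 2 : ℕ)) := by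
  rw [fiber_eq n k hk, Finset.card_sdiff_of_subset (subset_A n k)]
  have h1 := cardA n (k - 1)
  have h2 := cardA n k
  have hkk : (k - 1) * (k - 1 + 1) = (k - 1) * k := by
    congr 1
    omega
  rw [hkk] at h1
  have hc := Finset.card_le_card (subset_A n k)
  rw [Nat.cast_sub hc, h1, h2]

theorem sigma_even_mex_formula (n : ℕ) (hn : 0 < n) :
    ∑ π ∈ Finset.univ.filter (fun π : Nat.Partition n => Even (mex π)), (mex π : ℤ) =
      ∑ m ∈ Finset.range (n + 1), (2 * (m : ℤ) + 2) *
        (pz ((n : ℤ) - ((2 * m + 1) * (2 * m + 2) / 2 : ℕ)) -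
          pz ((n : ℤ) - ((2 * m + 2) * (2 * m + 3) / 2 : ℕ))) := by
  have hmaps : ∀ π ∈ Finset.univ.filter (fun π : Nat.Partition n => Even (mex π)),
      mex π / 2 - 1 ∈ Finset.range (n + 1) := by
    intro π hπ
    have h1 := mex_le π
    rw [Finset.mem_range]
    omega
  rw [← Finset.sum_fiberwise_of_maps_to hmaps (fun π => (mex π : ℤ))]
  apply Finset.sum_congr rfl
  intro m hm
  have hfe : (Finset.univ.filter (fun π : Nat.Partition n => Even (mex π))).filter
      (fun π => mex π / 2 - 1 = m)
      = Finset.univ.filter (fun π : Nat.Partition n => mex π = 2 * m + 2) := by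
    rw [Finset.filter_filter]
    ext π
    simp only [Finset.mem_filter, Finset.mem_univ, true_and]
    constructor
    · rintro ⟨⟨j, hj⟩, h2⟩
      have := mex_pos π
      omega
    · intro h
      rw [h]
      exact ⟨⟨m + 1, by ring⟩, by omega⟩
  rw [hfe]
  have hconst : ∑ π ∈ Finset.univ.filter (fun π : Nat.Partition n => mex π = 2 * m + 2),
      (mex π : ℤ)
      = (2 * (m : ℤ) + 2) *
        ((Finset.univ.filter (fun π : Nat.Partition n => mex π = 2 * m + 2)).card : ℤ) := by
    rw [Finset.sum_congr rfl
      (fun π hπ => by rw [(Finset.mem_filter.1 hπ).2] :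
        ∀ π ∈ Finset.univ.filter (fun π : Nat.Partition n => mex π = 2 * m + 2),
          (mex π : ℤ) = ((2 * m + 2 : ℕ) : ℤ))]
    rw [Finset.sum_const, nsmul_eq_mul]
    push_cast
    ring
  rw [hconst, pmex_card n (2 * m + 2) (by omega)]
  have e1 : (2 * m + 2 - 1) * (2 * m + 2) = (2 * m + 1) * (2 * m + 2) := by
    congr 1
  have e2 : (2 * m + 2) * (2 * m + 2 + 1) = (2 * m + 2) * (2 * m + 3) := by
    congr 1
  rw [e1, e2]
end

section
/- For every positive integer m and nonnegative integer n, the number of partitions of n with minimal excludant equal to m equals p(n − m(m−1)/2) − p(n − m(m+1)/2), where p(j)=0 for j<0. -/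
open Finset

namespace PmexAux

/-- The multiset `{1, 2, ..., k}`. -/
def m0 (k : ℕ) : Multiset ℕ := (Multiset.range k).map (· + 1)

lemma mem_m0 {k a : ℕ} : a ∈ m0 k ↔ 0 < a ∧ a ≤ k := by
  simp only [m0, Multiset.mem_map, Multiset.mem_range]
  constructor
  · rintro ⟨i, hi, rfl⟩; omega
  · rintro ⟨h1, h2⟩; exact ⟨a - 1, by omega, by omega⟩

lemma nodup_m0 (k : ℕ) : (m0 k).Nodup :=
  (Multiset.nodup_range k).map (fun a b h => by omega)

lemma sum_m0_two (k : ℕ) : (m0 k).sum * 2 = k * (k + 1) := by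
  induction k with
  | zero => simp [m0]
  | succ k ih =>
    rw [m0, Multiset.range_succ, Multiset.map_cons, Multiset.sum_cons, ← m0]
    nlinarith [ih]

lemma sum_m0 (k : ℕ) : (m0 k).sum = k * (k + 1) / 2 := by
  have := sum_m0_two k
  omega

lemma m0_le_iff {k : ℕ} {t : Multiset ℕ} : m0 k ≤ t ↔ ∀ a, 0 < a → a ≤ k → a ∈ t := by
  rw [Multiset.le_iff_subset (nodup_m0 k)]
  constructor
  · intro h a h1 h2; exact h (mem_m0.mpr ⟨h1, h2⟩)
  · intro h a ha; obtain ⟨h1, h2⟩ := mem_m0.mp ha; exact h a h1 h2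

noncomputable def A (k n : ℕ) : ℕ :=
  ((Finset.univ : Finset (Nat.Partition n)).filter (fun π => m0 k ≤ π.parts)).card

lemma A_card (k n : ℕ) (h : k * (k + 1) / 2 ≤ n) :
    A k n = Fintype.card (Nat.Partition (n - k * (k + 1) / 2)) := by
  rw [Fintype.card, A]
  refine Finset.card_bij' (fun π hπ => (⟨π.parts - m0 k,
      fun {i} hi => π.parts_pos (Multiset.mem_of_le (tsub_le_self) hi),
      by
        have h1 : π.parts - m0 k + m0 k = π.parts := tsub_add_cancel_of_le (Finset.mem_filter.mp hπ).2
        have := congrArg Multiset.sum h1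
        rw [Multiset.sum_add, sum_m0, π.parts_sum] at this
        omega⟩ : Nat.Partition (n - k * (k + 1) / 2)))
    (fun σ _ => (⟨σ.parts + m0 k,
      fun {i} hi => by
        rcases Multiset.mem_add.mp hi with h' | h'
        · exact σ.parts_pos h'
        · exact (mem_m0.mp h').1,
      by rw [Multiset.sum_add, σ.parts_sum, sum_m0]; omega⟩ : Nat.Partition n)) ?_ ?_ ?_ ?_
  · intro π hπ; exact Finset.mem_univ _
  · intro σ hσ
    simp only [Finset.mem_filter, Finset.mem_univ, true_and]
    exact Multiset.le_add_left _ _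
  · intro π hπ
    simp only [Finset.mem_filter, Finset.mem_univ, true_and] at hπ
    ext1
    exact tsub_add_cancel_of_le hπ
  · intro σ hσ
    ext1
    simp

lemma A_zero (k n : ℕ) (h : n < k * (k + 1) / 2) : A k n = 0 := by
  rw [A, Finset.card_eq_zero]
  ext π
  simp only [Finset.mem_filter, Finset.mem_univ, true_and, Finset.notMem_empty, iff_false]
  intro hle
  obtain ⟨u, hu⟩ := Multiset.le_iff_exists_add.mp hle
  have := congrArg Multiset.sum hu
  rw [Multiset.sum_add, sum_m0, π.parts_sum] at this
  omega

lemma A_cast (k n : ℕ) : (A k n : ℤ) = pz ((n : ℤ) - (k * (k + 1) / 2 : ℕ)) := by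
  obtain ⟨T, hT⟩ : ∃ T, k * (k + 1) / 2 = T := ⟨_, rfl⟩
  rw [hT]
  have hc := A_card k n
  have hz := A_zero k n
  rw [hT] at hc hz
  by_cases h : T ≤ n
  · rw [hc h, pz, if_pos (by omega)]
    have hna : ((n : ℤ) - T).toNat = n - T := by omega
    rw [hna]
  · rw [hz (by omega), pz, if_neg (by omega)]

lemma mem_le_n {n : ℕ} (π : Nat.Partition n) {a : ℕ} (ha : a ∈ π.parts) : a ≤ n := by
  have := Multiset.single_le_sum (fun x _ => Nat.zero_le x) a ha
  rwa [π.parts_sum] at this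

lemma mex_eq_iff {n m : ℕ} (π : Nat.Partition n) (hm : 0 < m) :
    mex π = m ↔ m0 (m - 1) ≤ π.parts ∧ m ∉ π.parts := by
  have hne : {j : ℕ | 0 < j ∧ j ∉ π.parts}.Nonempty := by
    refine ⟨n + 1, Nat.succ_pos n, fun hmem => ?_⟩
    exact absurd (mem_le_n π hmem) (by omega)
  constructor
  · intro h
    have hmem := Nat.sInf_mem hne
    rw [show sInf {j : ℕ | 0 < j ∧ j ∉ π.parts} = mex π from rfl, h] at hmem
    refine ⟨m0_le_iff.mpr fun a h1 h2 => ?_, hmem.2⟩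
    by_contra hna
    have : a ∈ {j : ℕ | 0 < j ∧ j ∉ π.parts} := ⟨h1, hna⟩
    have := Nat.sInf_le this
    rw [show sInf {j : ℕ | 0 < j ∧ j ∉ π.parts} = mex π from rfl, h] at this
    omega
  · rintro ⟨h1, h2⟩
    have hmem : m ∈ {j : ℕ | 0 < j ∧ j ∉ π.parts} := ⟨hm, h2⟩
    have hle : mex π ≤ m := Nat.sInf_le hmem
    have hmexmem := Nat.sInf_mem hne
    rcases Nat.lt_or_ge (mex π) m with hlt | hge
    · exact absurd (m0_le_iff.mp h1 (mex π) hmexmem.1 (by omega)) hmexmem.2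
    · omega

lemma m0_succ_le_iff {n m : ℕ} (π : Nat.Partition n) (hm : 0 < m) :
    m0 m ≤ π.parts ↔ m0 (m - 1) ≤ π.parts ∧ m ∈ π.parts := by
  rw [m0_le_iff, m0_le_iff]
  constructor
  · intro h
    exact ⟨fun a h1 h2 => h a h1 (by omega), h m hm le_rfl⟩
  · rintro ⟨h, hmem⟩ a h1 h2
    rcases Nat.lt_or_ge a m with h' | h'
    · exact h a h1 (by omega)
    · have : a = m := by omega
      subst this; exact hmem

lemma pmex_eq_sub (m n : ℕ) (hm : 0 < m) : pmex m n = A (m - 1) n - A m n := by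
  have hsub : (Finset.univ.filter (fun π : Nat.Partition n => m0 m ≤ π.parts)) ⊆
      (Finset.univ.filter (fun π : Nat.Partition n => m0 (m - 1) ≤ π.parts)) := by
    intro π hπ
    simp only [Finset.mem_filter, Finset.mem_univ, true_and] at *
    exact ((m0_succ_le_iff π hm).mp hπ).1
  rw [pmex, A, A, ← Finset.card_sdiff_of_subset hsub]
  congr 1
  ext π
  simp only [Finset.mem_filter, Finset.mem_univ, true_and, Finset.mem_sdiff, not_and,
    mex_eq_iff π hm, m0_succ_le_iff π hm]
  tauto

lemma A_le (m n : ℕ) (hm : 0 < m) : A m n ≤ A (m - 1) n := by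
  apply Finset.card_le_card
  intro π hπ
  simp only [Finset.mem_filter, Finset.mem_univ, true_and] at *
  exact ((m0_succ_le_iff π hm).mp hπ).1

end PmexAux

theorem pmex_formula (m n : ℕ) (hm : 0 < m) :
    (pmex m n : ℤ) =
      (pz ((n : ℤ) - (m * (m - 1) / 2 : ℕ)) : ℤ) -
        pz ((n : ℤ) - (m * (m + 1) / 2 : ℕ)) := by
  rw [PmexAux.pmex_eq_sub m n hm,
    Nat.cast_sub (PmexAux.A_le m n hm), PmexAux.A_cast, PmexAux.A_cast]
  have h1 : (m - 1) * (m - 1 + 1) / 2 = m * (m - 1) / 2 := by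
    congr 1
    have : m - 1 + 1 = m := by omega
    rw [this, Nat.mul_comm]
  have h2 : m * (m + 1) / 2 = m * (m + 1) / 2 := rfl
  rw [h1]
end
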